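/- arXiv:1506.00222 — 2 statements merged into one kernel-verified Lean document; each statement's English description precedes it below -/
import Mathlib

section
/- (Coarsening error identity) Let Q₁ ∈ R^{n₁×k}, Q₂ ∈ R^{n₂×k} be isometric, F₁, F₂ ∈ R^{k×k} with Q = [Q₁F₁; Q₂F₂] isometric, and let Q̂ = [F₁; F₂]. Let P̂ ∈ R^{2k×k'} be isometric with P̂* Q̂ = 0 and Q̂ Q̂* + P̂ P̂* = I. Then for any x = [Q₁ x̂₁; Q₂ x̂₂] with x̂₁, x̂₂ ∈ R^k, we have ‖x − Q Q* x‖ = ‖P̂* [x̂₁; x̂₂]‖. -/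
open Matrix

/-- Euclidean norm of a real vector indexed by a finite type. -/
noncomputable def vecEnorm {ι : Type*} [Fintype ι] (v : ι → ℝ) : ℝ :=
  Real.sqrt (∑ i, v i ^ 2)

lemma enorm_eq_sqrt_dot {ι : Type*} [Fintype ι] (v : ι → ℝ) :
    vecEnorm v = Real.sqrt (v ⬝ᵥ v) := by
  simp [vecEnorm, dotProduct, sq]

lemma dot_mulVec_self {m n : Type*} [Fintype m] [Fintype n]
    (M : Matrix m n ℝ) (v : n → ℝ) :
    (M.mulVec v) ⬝ᵥ (M.mulVec v) = v ⬝ᵥ ((Mᵀ * M).mulVec v) := by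
  rw [← mulVec_mulVec, mulVec_transpose, dotProduct_mulVec]
  exact dotProduct_comm _ _

theorem coarsening_error_identity {n₁ n₂ k k' : ℕ}
    (Q₁ : Matrix (Fin n₁) (Fin k) ℝ) (Q₂ : Matrix (Fin n₂) (Fin k) ℝ)
    (F₁ F₂ : Matrix (Fin k) (Fin k) ℝ)
    (Phat : Matrix (Fin k ⊕ Fin k) (Fin k') ℝ)
    (hQ₁ : Q₁ᵀ * Q₁ = 1) (hQ₂ : Q₂ᵀ * Q₂ = 1)
    (hQ : (Matrix.fromRows (Q₁ * F₁) (Q₂ * F₂))ᵀ * Matrix.fromRows (Q₁ * F₁) (Q₂ * F₂) = 1)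
    (hPhat : Phatᵀ * Phat = 1)
    (hperp : Phatᵀ * Matrix.fromRows F₁ F₂ = 0)
    (hcomplete : Matrix.fromRows F₁ F₂ * (Matrix.fromRows F₁ F₂)ᵀ + Phat * Phatᵀ = 1)
    (xh1 xh2 : Fin k → ℝ) :
    vecEnorm (Sum.elim (Q₁.mulVec xh1) (Q₂.mulVec xh2)
        - (Matrix.fromRows (Q₁ * F₁) (Q₂ * F₂)).mulVec
            ((Matrix.fromRows (Q₁ * F₁) (Q₂ * F₂))ᵀ.mulVec
              (Sum.elim (Q₁.mulVec xh1) (Q₂.mulVec xh2))))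
      = vecEnorm (Phatᵀ.mulVec (Sum.elim xh1 xh2)) := by
  set B : Matrix (Fin n₁ ⊕ Fin n₂) (Fin k ⊕ Fin k) ℝ := Matrix.fromBlocks Q₁ 0 0 Q₂ with hB
  set Qh : Matrix (Fin k ⊕ Fin k) (Fin k) ℝ := Matrix.fromRows F₁ F₂ with hQh
  set xh : (Fin k ⊕ Fin k) → ℝ := Sum.elim xh1 xh2 with hxh
  have hBtB : Bᵀ * B = 1 := by
    rw [hB, Matrix.fromBlocks_transpose, Matrix.fromBlocks_multiply]
    simp [hQ₁, hQ₂, Matrix.fromBlocks_one]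
  have hx : Sum.elim (Q₁.mulVec xh1) (Q₂.mulVec xh2) = B.mulVec xh := by
    rw [hB, hxh, Matrix.fromBlocks_mulVec]
    simp
  have hBQ : Matrix.fromRows (Q₁ * F₁) (Q₂ * F₂) = B * Qh := by
    rw [hB, hQh]
    ext (i | i) j <;> simp [Matrix.mul_apply, Matrix.fromBlocks, Matrix.fromRows_apply_inl, Matrix.fromRows_apply_inr]
  rw [hx, hBQ]
  have hPP : Phat * Phatᵀ = 1 - Qh * Qhᵀ := by
    rw [← hcomplete]; exact (add_sub_cancel_left _ _).symm
  -- rewrite LHS vector as a single matrix-vector product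
  have key : B.mulVec xh - (B * Qh).mulVec ((B * Qh)ᵀ.mulVec (B.mulVec xh))
      = (B * (Phat * Phatᵀ)).mulVec xh := by
    rw [mulVec_mulVec, mulVec_mulVec, ← sub_mulVec]
    congr 1
    have h1 : (B * Qh)ᵀ * B = Qhᵀ := by
      rw [Matrix.transpose_mul, Matrix.mul_assoc, hBtB, Matrix.mul_one]
    rw [Matrix.mul_assoc (B * Qh), h1, hPP, Matrix.mul_sub, Matrix.mul_one,
      Matrix.mul_assoc]
  rw [key, enorm_eq_sqrt_dot, enorm_eq_sqrt_dot, dot_mulVec_self, dot_mulVec_self]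
  have hcancel : ∀ X : Matrix (Fin k ⊕ Fin k) (Fin k ⊕ Fin k) ℝ, Bᵀ * (B * X) = X := by
    intro X; rw [← Matrix.mul_assoc, hBtB, Matrix.one_mul]
  have hM : (B * (Phat * Phatᵀ))ᵀ * (B * (Phat * Phatᵀ)) = Phatᵀᵀ * Phatᵀ := by
    simp only [Matrix.transpose_mul, transpose_transpose, Matrix.mul_assoc]
    rw [hcancel, ← Matrix.mul_assoc Phatᵀ Phat, hPhat, Matrix.one_mul]
  rw [hM]
end

section
/- (Projection error recursion for non-leaf clusters) Let t have sons t₁, t₂; let V_t = [V_{t₁}E_{t₁}; V_{t₂}E_{t₂}] and Q_t = diag(Q_{t₁}, Q_{t₂}) Q̂_t with Q̂_t = [F_{t₁}; F_{t₂}], where Q_{t₁}, Q_{t₂}, Q_t are isometric. Suppose V_{t_j} − Q_{t_j} Q_{t_j}* V_{t_j} = P_{t_j} Z_{t_j} with P_{t_j} isometric and P_{t_j}* Q_{t_j} = 0 for j = 1,2, and let P̃_t be isometric with P̃_t* Q̂_t = 0 and Q̂_t Q̂_t* + P̃_t P̃_t* = I. Set V̂_t = [Q_{t₁}* V_{t₁}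 E_{t₁}; Q_{t₂}* V_{t₂} E_{t₂}]. Then V_t − Q_t Q_t* V_t = [P_{t₁} Z_{t₁} E_{t₁}; P_{t₂} Z_{t₂} E_{t₂}] + diag(Q_{t₁}, Q_{t₂}) P̃_t P̃_t* V̂_t. -/
open Matrix

lemma fromRows_sub' {m₁ m₂ n : ℕ} (A₁ C₁ : Matrix (Fin m₁) (Fin n) ℝ)
    (A₂ C₂ : Matrix (Fin m₂) (Fin n) ℝ) :
    Matrix.fromRows A₁ A₂ - Matrix.fromRows C₁ C₂ = Matrix.fromRows (A₁ - C₁) (A₂ - C₂) := by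
  ext (_ | _) _ <;> simp

theorem projection_error_recursion_nonleaf {n₁ n₂ k k₁' k₂' k' : ℕ}
    (V₁ : Matrix (Fin n₁) (Fin k) ℝ) (V₂ : Matrix (Fin n₂) (Fin k) ℝ)
    (Q₁ : Matrix (Fin n₁) (Fin k) ℝ) (Q₂ : Matrix (Fin n₂) (Fin k) ℝ)
    (E₁ E₂ F₁ F₂ : Matrix (Fin k) (Fin k) ℝ)
    (P₁ : Matrix (Fin n₁) (Fin k₁') ℝ) (P₂ : Matrix (Fin n₂) (Fin k₂') ℝ)
    (Z₁ : Matrix (Fin k₁') (Fin k) ℝ) (Z₂ : Matrix (Fin k₂') (Fin k) ℝ)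
    (Ptil : Matrix (Fin k ⊕ Fin k) (Fin k') ℝ)
    (hQ₁ : Q₁ᵀ * Q₁ = 1) (hQ₂ : Q₂ᵀ * Q₂ = 1)
    -- the father basis matrix Q_t = diag(Q₁,Q₂) · [F₁; F₂] is isometric
    (hQt : (Matrix.fromBlocks Q₁ 0 0 Q₂ * Matrix.fromRows F₁ F₂)ᵀ
            * (Matrix.fromBlocks Q₁ 0 0 Q₂ * Matrix.fromRows F₁ F₂) = 1)
    -- projection error representations in the sons
    (hP₁iso : P₁ᵀ * P₁ = 1) (hP₂iso : P₂ᵀ * P₂ = 1)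
    (hP₁perp : P₁ᵀ * Q₁ = 0) (hP₂perp : P₂ᵀ * Q₂ = 0)
    (hPZ₁ : V₁ - Q₁ * Q₁ᵀ * V₁ = P₁ * Z₁)
    (hPZ₂ : V₂ - Q₂ * Q₂ᵀ * V₂ = P₂ * Z₂)
    -- P̃ₜ extends Q̂ₜ = [F₁; F₂] to an orthonormal basis of R^{2k}
    (hPtil : Ptilᵀ * Ptil = 1)
    (hPtilPerp : Ptilᵀ * Matrix.fromRows F₁ F₂ = 0)
    (hcomplete : Matrix.fromRows F₁ F₂ * (Matrix.fromRows F₁ F₂)ᵀ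
        + Ptil * Ptilᵀ = 1) :
    Matrix.fromRows (V₁ * E₁) (V₂ * E₂)
        - (Matrix.fromBlocks Q₁ 0 0 Q₂ * Matrix.fromRows F₁ F₂)
          * (Matrix.fromBlocks Q₁ 0 0 Q₂ * Matrix.fromRows F₁ F₂)ᵀ
          * Matrix.fromRows (V₁ * E₁) (V₂ * E₂)
      = Matrix.fromRows (P₁ * Z₁ * E₁) (P₂ * Z₂ * E₂)
        + Matrix.fromBlocks Q₁ 0 0 Q₂ * Ptil * Ptilᵀ
          * Matrix.fromRows (Q₁ᵀ * V₁ * E₁) (Q₂ᵀ * V₂ * E₂) := by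
  set D := Matrix.fromBlocks Q₁ (0 : Matrix (Fin n₁) (Fin k) ℝ)
      (0 : Matrix (Fin n₂) (Fin k) ℝ) Q₂ with hD
  set F := Matrix.fromRows F₁ F₂ with hF
  set V := Matrix.fromRows (V₁ * E₁) (V₂ * E₂) with hV
  set Vh := Matrix.fromRows (Q₁ᵀ * V₁ * E₁) (Q₂ᵀ * V₂ * E₂) with hVh
  have hDT : Dᵀ = Matrix.fromBlocks Q₁ᵀ (0 : Matrix (Fin k) (Fin n₂) ℝ)
      (0 : Matrix (Fin k) (Fin n₁) ℝ) Q₂ᵀ := by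
    simp [hD, Matrix.fromBlocks_transpose]
  have hDTV : Dᵀ * V = Vh := by
    rw [hDT, hV, hVh, Matrix.fromBlocks_mul_fromRows]
    simp [Matrix.mul_assoc]
  have hFF : F * Fᵀ = 1 - Ptil * Ptilᵀ := (eq_sub_of_add_eq hcomplete)
  have hsub : V - D * Vh = Matrix.fromRows (P₁ * Z₁ * E₁) (P₂ * Z₂ * E₂) := by
    rw [hD, hVh, Matrix.fromBlocks_mul_fromRows, hV, fromRows_sub', ← hPZ₁, ← hPZ₂,
      Matrix.sub_mul, Matrix.sub_mul]
    simp [Matrix.mul_assoc]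
  calc V - D * F * (D * F)ᵀ * V
      = V - D * ((F * Fᵀ) * (Dᵀ * V)) := by
        rw [Matrix.transpose_mul]; simp only [Matrix.mul_assoc]
    _ = V - D * ((1 - Ptil * Ptilᵀ) * Vh) := by rw [hFF, hDTV]
    _ = (V - D * Vh) + D * Ptil * Ptilᵀ * Vh := by
        simp only [Matrix.sub_mul, Matrix.mul_sub, Matrix.one_mul, Matrix.mul_assoc]
        abel
    _ = Matrix.fromRows (P₁ * Z₁ * E₁) (P₂ * Z₂ * E₂)
          + D * Ptil * Ptilᵀ * Vh := by rw [hsub]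
end
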